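/- For all integers n > k ≥ 1, the endomorphism algebra of the k-th tensor power of the standard representation of the dicyclic group of degree n satisfies dim_ℂ End_{Dic_n}(V^{⊗k}) = (1/2)·binomial(2k,k). -/

import Mathlib

open scoped TensorProduct
open Matrix

noncomputable section

/-- `ℂ²`, the standard two-dimensional complex vector space. -/
abbrev V2 : Type := Fin 2 → ℂ

/-- The standard representation of a subgroup `G ≤ GL₂(ℂ)` on `ℂ²`, by matrix-vector
multiplication. -/
def stdRep (G : Subgroup (GL (Fin 2) ℂ)) : Representation ℂ G V2 where
  toFun g := Matrix.toLin' ((g : GL (Fin 2) ℂ) : Matrix (Fin 2) (Fin 2) ℂ)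
  map_one' := by
    simp only [OneMemClass.coe_one, Units.val_one, Matrix.toLin'_one]
    rfl
  map_mul' g h := by
    simp only [MulMemClass.coe_mul, Units.val_mul, Matrix.toLin'_mul]
    rfl

/-- `TPow j` is the `(j+1)`-st tensor power `V^{⊗(j+1)}` of `V = ℂ²`, realized as an
iterated binary tensor product (bundled as an object of `ModuleCat ℂ` so that the
recursion carries its module structure). -/
def TPow : ℕ → ModuleCat ℂ
  | 0 => ModuleCat.of ℂ V2
  | (j + 1) => ModuleCat.of ℂ (TPow j ⊗[ℂ] V2)

/-- The diagonal representation of `G ≤ GL₂(ℂ)` on `TPow j = V^{⊗(j+1)}`. -/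
def TPowRep (G : Subgroup (GL (Fin 2) ℂ)) : (j : ℕ) → Representation ℂ G (TPow j)
  | 0 => stdRep G
  | (j + 1) => (TPowRep G j).tprod (stdRep G)

/-- The basis vector `v_s^{⊗(j+1)}` of `TPow j = V^{⊗(j+1)}`, for `s : Fin 2`. -/
def vpow (s : Fin 2) : (j : ℕ) → TPow j
  | 0 => Pi.single s 1
  | (j + 1) => vpow s j ⊗ₜ[ℂ] Pi.single s 1

/-- The subspace `V_{j+1}` of `V^{⊗(j+1)}` spanned by `v₁^{⊗(j+1)}` and `v₂^{⊗(j+1)}`. -/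
def Vsub (j : ℕ) : Submodule ℂ (TPow j) := Submodule.span ℂ {vpow 0 j, vpow 1 j}

/-- The space `End_G(W)` of `G`-equivariant linear endomorphisms of a representation `W`. -/
def equivEnd {G W : Type*} [Group G] [AddCommGroup W] [Module ℂ W]
    (ρ : Representation ℂ G W) : Submodule ℂ (W →ₗ[ℂ] W) where
  carrier := {f | ∀ g : G, f ∘ₗ ρ g = ρ g ∘ₗ f}
  add_mem' := by
    intro f h hf hh g
    simp only [LinearMap.add_comp, LinearMap.comp_add, hf g, hh g]
  zero_mem' := by
    intro g
    simp only [LinearMap.zero_comp, LinearMap.comp_zero]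
  smul_mem' := by
    intro c f hf g
    simp only [LinearMap.smul_comp, LinearMap.comp_smul, hf g]


namespace DicAux

/-- Index type for the basis of `TPow j`. -/
def Idx : ℕ → Type
  | 0 => Fin 2
  | (j+1) => Idx j × Fin 2

/-- `Idx 0` is definitionally `Fin 2`. -/
def idx0 (i : Idx 0) : Fin 2 := i

instance instDecEqIdx : (j : ℕ) → DecidableEq (Idx j)
  | 0 => inferInstanceAs (DecidableEq (Fin 2))
  | (j+1) => @instDecidableEqProd _ _ (instDecEqIdx j) _

instance instFintypeIdx : (j : ℕ) → Fintype (Idx j)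
  | 0 => inferInstanceAs (Fintype (Fin 2))
  | (j+1) => @instFintypeProd _ _ (instFintypeIdx j) _

/-- Basis of `TPow j`. -/
def bIdx : (j : ℕ) → Module.Basis (Idx j) ℂ (TPow j)
  | 0 => Pi.basisFun ℂ (Fin 2)
  | (j+1) => (bIdx j).tensorProduct (Pi.basisFun ℂ (Fin 2))

def fl2 (c : Fin 2) : Fin 2 := 1 - c

def flipIdx : (j : ℕ) → Idx j → Idx j
  | 0, c => fl2 c
  | (j+1), pc => (flipIdx j pc.1, fl2 pc.2)

def sgn2 (c : Fin 2) : ℂ := if c = 1 then -1 else 1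

def sgnIdx : (j : ℕ) → Idx j → ℂ
  | 0, c => sgn2 c
  | (j+1), pc => sgnIdx j pc.1 * sgn2 pc.2

def onesIdx : (j : ℕ) → Idx j → ℕ
  | 0, c => (idx0 c : ℕ)
  | (j+1), pc => onesIdx j pc.1 + (pc.2 : ℕ)

def firstIdx : (j : ℕ) → Idx j → Fin 2
  | 0, c => c
  | (j+1), pc => pc.2

def ev2 (θ : ℂ) (c : Fin 2) : ℂ := if c = 1 then Complex.exp (-θ) else Complex.exp θ

def evIdx (θ : ℂ) : (j : ℕ) → Idx j → ℂ
  | 0, c => ev2 θ c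
  | (j+1), pc => evIdx θ j pc.1 * ev2 θ pc.2

lemma fl2_fl2 (c : Fin 2) : fl2 (fl2 c) = c := by fin_cases c <;> rfl

lemma flip_flip (j : ℕ) (i : Idx j) : flipIdx j (flipIdx j i) = i := by
  induction j with
  | zero => exact fl2_fl2 i
  | succ j ih => exact Prod.ext (ih i.1) (fl2_fl2 i.2)

lemma sgn2_mul_self (c : Fin 2) : sgn2 c * sgn2 c = 1 := by
  fin_cases c <;> simp [sgn2]

lemma sgn_mul_self (j : ℕ) (i : Idx j) : sgnIdx j i * sgnIdx j i = 1 := by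
  induction j with
  | zero => exact sgn2_mul_self i
  | succ j ih =>
    show (sgnIdx j i.1 * sgn2 i.2) * (sgnIdx j i.1 * sgn2 i.2) = 1
    rw [mul_mul_mul_comm, ih i.1, sgn2_mul_self, one_mul]

lemma sgn2_mul_fl2 (c : Fin 2) : sgn2 c * sgn2 (fl2 c) = -1 := by
  fin_cases c <;> simp [sgn2, fl2]

lemma sgn_mul_flip (j : ℕ) (i : Idx j) :
    sgnIdx j i * sgnIdx j (flipIdx j i) = (-1) ^ (j + 1) := by
  induction j with
  | zero => exact (sgn2_mul_fl2 i).trans (by norm_num)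
  | succ j ih =>
    show (sgnIdx j i.1 * sgn2 i.2) * (sgnIdx j (flipIdx j i.1) * sgn2 (fl2 i.2)) = _
    rw [mul_mul_mul_comm, ih i.1, sgn2_mul_fl2, pow_succ]
    ring

lemma firstIdx_flip (j : ℕ) (i : Idx j) : firstIdx j (flipIdx j i) = fl2 (firstIdx j i) := by
  cases j <;> rfl

lemma ones_le (j : ℕ) (i : Idx j) : onesIdx j i ≤ j + 1 := by
  induction j with
  | zero => exact (Fin.is_le (idx0 i))
  | succ j ih =>
    have := ih i.1
    have : (i.2 : ℕ) ≤ 1 := Fin.is_le i.2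
    show onesIdx j i.1 + (i.2 : ℕ) ≤ j + 1 + 1
    omega

lemma ones_flip (j : ℕ) (i : Idx j) :
    onesIdx j (flipIdx j i) = j + 1 - onesIdx j i := by
  induction j with
  | zero =>
    show (idx0 (fl2 (idx0 i)) : ℕ) = 1 - (idx0 i : ℕ)
    rcases Fin.exists_fin_two.mp ⟨idx0 i, rfl⟩ with h | h <;> rw [h] <;> rfl
  | succ j ih =>
    obtain ⟨p, c⟩ := i
    show onesIdx j (flipIdx j p) + ((fl2 c : Fin 2) : ℕ) = (j + 1 + 1) - (onesIdx j p + (c : ℕ))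
    rw [ih p]
    have h1 := ones_le j p
    have h2 : (c : ℕ) ≤ 1 := Fin.is_le c
    have h3 : ((fl2 c : Fin 2) : ℕ) = 1 - (c : ℕ) := by fin_cases c <;> rfl
    omega

end DicAux
namespace DicAux

lemma bIdx_zero (i : Idx 0) : bIdx 0 i = Pi.single (idx0 i) 1 := by
  show Pi.basisFun ℂ (Fin 2) (idx0 i) = _
  simp [Pi.basisFun_apply]

lemma bIdx_succ (j : ℕ) (i : Idx (j + 1)) :
    bIdx (j + 1) i = (bIdx j i.1) ⊗ₜ[ℂ] (Pi.single i.2 1 : V2) := by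
  show (bIdx j).tensorProduct (Pi.basisFun ℂ (Fin 2)) (i.1, i.2) = _
  rw [Module.Basis.tensorProduct_apply]
  simp [Pi.basisFun_apply]

variable {G : Subgroup (GL (Fin 2) ℂ)}

lemma TPowRep_succ (j : ℕ) (g : G) (x : TPow j) (y : V2) :
    TPowRep G (j + 1) g (x ⊗ₜ[ℂ] y) = (TPowRep G j g x) ⊗ₜ[ℂ] (stdRep G g y) := by
  rfl

lemma stdRep_X (g : G) (hg : ((g : GL (Fin 2) ℂ) : Matrix (Fin 2) (Fin 2) ℂ) = !![0, -1; 1, 0])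
    (c : Fin 2) :
    stdRep G g (Pi.single c 1) = sgn2 c • (Pi.single (fl2 c) 1 : V2) := by
  show Matrix.toLin' ((g : GL (Fin 2) ℂ) : Matrix (Fin 2) (Fin 2) ℂ) _ = _
  rw [hg]
  funext x
  fin_cases c <;> fin_cases x <;>
    simp [Matrix.toLin'_apply, Matrix.mulVec, dotProduct, Fin.sum_univ_two,
      Pi.single_apply, sgn2, fl2]

lemma stdRep_A {θ : ℂ} (g : G)
    (hg : ((g : GL (Fin 2) ℂ) : Matrix (Fin 2) (Fin 2) ℂ) = !![Complex.exp θ, 0; 0, Complex.exp (-θ)])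
    (c : Fin 2) :
    stdRep G g (Pi.single c 1) = ev2 θ c • (Pi.single c 1 : V2) := by
  show Matrix.toLin' ((g : GL (Fin 2) ℂ) : Matrix (Fin 2) (Fin 2) ℂ) _ = _
  rw [hg]
  funext x
  fin_cases c <;> fin_cases x <;>
    simp [Matrix.toLin'_apply, Matrix.mulVec, dotProduct, Fin.sum_univ_two,
      Pi.single_apply, ev2]

lemma rep_X (g : G) (hg : ((g : GL (Fin 2) ℂ) : Matrix (Fin 2) (Fin 2) ℂ) = !![0, -1; 1, 0])
    (j : ℕ) (i : Idx j) :
    TPowRep G j g (bIdx j i) = sgnIdx j i • bIdx j (flipIdx j i) := by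
  induction j with
  | zero =>
    show stdRep G g (bIdx 0 i) = _
    rw [bIdx_zero, stdRep_X g hg, bIdx_zero]
    rfl
  | succ j ih =>
    rw [bIdx_succ, TPowRep_succ, ih i.1, stdRep_X g hg, bIdx_succ j (flipIdx (j+1) i)]
    simp only [TensorProduct.smul_tmul', TensorProduct.tmul_smul, smul_smul]
    congr 1
    show (sgn2 i.2 * sgnIdx j i.1) • (bIdx j) (flipIdx j i.1)
        = (sgnIdx j i.1 * sgn2 i.2) • (bIdx j) (flipIdx j i.1)
    rw [mul_comm]

lemma rep_A {θ : ℂ} (g : G)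
    (hg : ((g : GL (Fin 2) ℂ) : Matrix (Fin 2) (Fin 2) ℂ) = !![Complex.exp θ, 0; 0, Complex.exp (-θ)])
    (j : ℕ) (i : Idx j) :
    TPowRep G j g (bIdx j i) = evIdx θ j i • bIdx j i := by
  induction j with
  | zero =>
    show stdRep G g (bIdx 0 i) = _
    rw [bIdx_zero, stdRep_A g hg]
    rfl
  | succ j ih =>
    rw [bIdx_succ, TPowRep_succ, ih i.1, stdRep_A g hg]
    simp only [TensorProduct.smul_tmul', TensorProduct.tmul_smul, smul_smul]
    congr 1
    show (ev2 θ i.2 * evIdx θ j i.1) • (bIdx j) i.1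
        = (evIdx θ j i.1 * ev2 θ i.2) • (bIdx j) i.1
    rw [mul_comm]

lemma evIdx_eq_exp (θ : ℂ) (j : ℕ) (i : Idx j) :
    evIdx θ j i = Complex.exp ((((j : ℤ) + 1) - 2 * (onesIdx j i : ℤ)) * θ) := by
  induction j with
  | zero =>
    show ev2 θ (idx0 i) = _
    simp only [show onesIdx 0 i = (idx0 i : ℕ) from rfl]
    rcases Fin.exists_fin_two.mp ⟨idx0 i, rfl⟩ with h | h <;> rw [h] <;>
      simp [ev2] <;> norm_num
  | succ j ih =>
    show evIdx θ j i.1 * ev2 θ i.2 = _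
    rw [ih i.1]
    have : (onesIdx (j+1) i : ℤ) = (onesIdx j i.1 : ℤ) + ((i.2 : ℕ) : ℤ) := by
      show ((onesIdx j i.1 + (i.2 : ℕ) : ℕ) : ℤ) = _
      push_cast; ring
    rw [this]
    rcases Fin.exists_fin_two.mp ⟨i.2, rfl⟩ with h | h <;> rw [h] <;>
      simp [ev2, ← Complex.exp_add] <;> ring_nf

end DicAux
namespace DicAux

section Coord

variable {j : ℕ}

local notation "B" => bIdx j

lemma repr_of_diag (L : TPow j →ₗ[ℂ] TPow j) (c : Idx j → ℂ)
    (hL : ∀ s, L (B s) = c s • B s) (x : TPow j) (i : Idx j) :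
    (B).repr (L x) i = c i * (B).repr x i := by
  have : ((B).coord i) ∘ₗ L = c i • (B).coord i := by
    apply (B).ext
    intro s
    simp only [LinearMap.comp_apply, hL s, _root_.map_smul, LinearMap.smul_apply]
    by_cases h : s = i
    · subst h; simp [Module.Basis.coord_apply, Module.Basis.repr_self]
    · simp [Module.Basis.coord_apply, Module.Basis.repr_self, Finsupp.single_apply, h, Ne.symm h]
  have := congrArg (fun L' => L' x) this
  simpa [Module.Basis.coord_apply] using this

lemma repr_of_perm (L : TPow j →ₗ[ℂ] TPow j) (c : Idx j → ℂ) (σ : Idx j → Idx j)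
    (hσ : ∀ s, σ (σ s) = s)
    (hL : ∀ s, L (B s) = c s • B (σ s)) (x : TPow j) (i : Idx j) :
    (B).repr (L x) i = c (σ i) * (B).repr x (σ i) := by
  have : ((B).coord i) ∘ₗ L = c (σ i) • (B).coord (σ i) := by
    apply (B).ext
    intro s
    simp only [LinearMap.comp_apply, hL s, _root_.map_smul, LinearMap.smul_apply]
    by_cases h : s = σ i
    · subst h; simp [Module.Basis.coord_apply, Module.Basis.repr_self, hσ]
    · have h2 : σ s ≠ i := fun hc => h (by rw [← hσ s, hc])
      simp [Module.Basis.coord_apply, Module.Basis.repr_self, Finsupp.single_apply, h, h2]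
  have := congrArg (fun L' => L' x) this
  simpa [Module.Basis.coord_apply] using this

variable {G : Subgroup (GL (Fin 2) ℂ)}

/-- Commutation with a diagonal operator in coordinates. -/
lemma comm_diag_iff (g : G) (c : Idx j → ℂ)
    (hg : ∀ s, TPowRep G j g (B s) = c s • B s) (f : TPow j →ₗ[ℂ] TPow j) :
    f ∘ₗ TPowRep G j g = TPowRep G j g ∘ₗ f ↔
      ∀ i t, c t * (B).repr (f (B t)) i = c i * (B).repr (f (B t)) i := by
  constructor
  · intro h i t
    have := congrArg (fun L => (B).repr (L (B t)) i) h
    simp only [LinearMap.comp_apply] at this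
    rw [hg t, _root_.map_smul, _root_.map_smul] at this
    rw [repr_of_diag (TPowRep G j g) c hg (f (B t)) i] at this
    simpa using this
  · intro h
    apply (B).ext
    intro t
    apply (B).ext_elem
    intro i
    simp only [LinearMap.comp_apply]
    rw [hg t, _root_.map_smul, _root_.map_smul, repr_of_diag (TPowRep G j g) c hg (f (B t)) i]
    simpa using h i t

/-- Commutation with a signed permutation operator in coordinates. -/
lemma comm_perm_iff (g : G) (c : Idx j → ℂ) (σ : Idx j → Idx j) (hσ : ∀ s, σ (σ s) = s)
    (hg : ∀ s, TPowRep G j g (B s) = c s • B (σ s)) (f : TPow j →ₗ[ℂ] TPow j) :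
    f ∘ₗ TPowRep G j g = TPowRep G j g ∘ₗ f ↔
      ∀ i t, c t * (B).repr (f (B (σ t))) i = c (σ i) * (B).repr (f (B t)) (σ i) := by
  constructor
  · intro h i t
    have := congrArg (fun L => (B).repr (L (B t)) i) h
    simp only [LinearMap.comp_apply] at this
    rw [hg t, _root_.map_smul, _root_.map_smul] at this
    rw [repr_of_perm (TPowRep G j g) c σ hσ hg (f (B t)) i] at this
    simpa using this
  · intro h
    apply (B).ext
    intro t
    apply (B).ext_elem
    intro i
    simp only [LinearMap.comp_apply]
    rw [hg t, _root_.map_smul, _root_.map_smul, repr_of_perm (TPowRep G j g) c σ hσ hg (f (B t)) i]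
    simpa using h i t

end Coord

section Closure

variable {X A : GL (Fin 2) ℂ} {j : ℕ}

lemma X_mem : X ∈ Subgroup.closure {X, A} :=
  Subgroup.subset_closure (Set.mem_insert _ _)

lemma A_mem : A ∈ Subgroup.closure {X, A} :=
  Subgroup.subset_closure (Set.mem_insert_of_mem _ rfl)

lemma mem_equivEnd_iff (f : TPow j →ₗ[ℂ] TPow j) :
    f ∈ equivEnd (TPowRep (Subgroup.closure {X, A}) j) ↔
      (f ∘ₗ TPowRep (Subgroup.closure {X, A}) j ⟨X, X_mem⟩ =
        TPowRep (Subgroup.closure {X, A}) j ⟨X, X_mem⟩ ∘ₗ f) ∧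
      (f ∘ₗ TPowRep (Subgroup.closure {X, A}) j ⟨A, A_mem⟩ =
        TPowRep (Subgroup.closure {X, A}) j ⟨A, A_mem⟩ ∘ₗ f) := by
  set G := Subgroup.closure {X, A} with hGdef
  set ρ := TPowRep G j with hρ
  constructor
  · intro hf
    exact ⟨hf _, hf _⟩
  · rintro ⟨hfX, hfA⟩ ⟨x, hx⟩
    induction hx using Subgroup.closure_induction with
    | mem y hy =>
      rcases hy with rfl | rfl
      · exact hfX
      · exact hfA
    | one =>
      have h1 : (⟨(1 : GL (Fin 2) ℂ), Subgroup.one_mem G⟩ : G) = 1 := rfl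
      rw [h1, _root_.map_one]
      rfl
    | mul y z hy hz ihy ihz =>
      have hyz : (⟨y * z, _⟩ : G) = ⟨y, hy⟩ * ⟨z, hz⟩ := rfl
      rw [hyz, _root_.map_mul]
      calc f ∘ₗ (ρ ⟨y, hy⟩ * ρ ⟨z, hz⟩)
          = (f ∘ₗ ρ ⟨y, hy⟩) ∘ₗ ρ ⟨z, hz⟩ := rfl
        _ = (ρ ⟨y, hy⟩ ∘ₗ f) ∘ₗ ρ ⟨z, hz⟩ := by rw [ihy]
        _ = ρ ⟨y, hy⟩ ∘ₗ (f ∘ₗ ρ ⟨z, hz⟩) := rfl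
        _ = ρ ⟨y, hy⟩ ∘ₗ (ρ ⟨z, hz⟩ ∘ₗ f) := by rw [ihz]
        _ = (ρ ⟨y, hy⟩ * ρ ⟨z, hz⟩) ∘ₗ f := rfl
    | inv y hy ihy =>
      have hinv : (⟨y⁻¹, _⟩ : G) = (⟨y, hy⟩ : G)⁻¹ := rfl
      rw [hinv]
      have h1 : ρ (⟨y, hy⟩ : G)⁻¹ ∘ₗ ρ ⟨y, hy⟩ = LinearMap.id := by
        have : ρ ((⟨y, hy⟩ : G)⁻¹ * ⟨y, hy⟩) = 1 := by rw [inv_mul_cancel, _root_.map_one]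
        rw [_root_.map_mul] at this
        exact this
      have h2 : ρ ⟨y, hy⟩ ∘ₗ ρ (⟨y, hy⟩ : G)⁻¹ = LinearMap.id := by
        have : ρ ((⟨y, hy⟩ : G) * (⟨y, hy⟩ : G)⁻¹) = 1 := by rw [mul_inv_cancel, _root_.map_one]
        rw [_root_.map_mul] at this
        exact this
      calc f ∘ₗ ρ (⟨y, hy⟩ : G)⁻¹
          = (LinearMap.id ∘ₗ f) ∘ₗ ρ (⟨y, hy⟩ : G)⁻¹ := by rw [LinearMap.id_comp]
        _ = ((ρ (⟨y, hy⟩ : G)⁻¹ ∘ₗ ρ ⟨y, hy⟩) ∘ₗ f) ∘ₗ ρ (⟨y, hy⟩ : G)⁻¹ := by rw [h1]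
        _ = ρ (⟨y, hy⟩ : G)⁻¹ ∘ₗ ((ρ ⟨y, hy⟩ ∘ₗ f) ∘ₗ ρ (⟨y, hy⟩ : G)⁻¹) := by
              simp only [LinearMap.comp_assoc]
        _ = ρ (⟨y, hy⟩ : G)⁻¹ ∘ₗ ((f ∘ₗ ρ ⟨y, hy⟩) ∘ₗ ρ (⟨y, hy⟩ : G)⁻¹) := by rw [ihy]
        _ = ρ (⟨y, hy⟩ : G)⁻¹ ∘ₗ (f ∘ₗ (ρ ⟨y, hy⟩ ∘ₗ ρ (⟨y, hy⟩ : G)⁻¹)) := by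
              simp only [LinearMap.comp_assoc]
        _ = ρ (⟨y, hy⟩ : G)⁻¹ ∘ₗ f := by rw [h2, LinearMap.comp_id]

end Closure

end DicAux
namespace DicAux

variable (j : ℕ)

/-- The solution space of the commutation equations, in matrix coordinates. -/
def solSet : Submodule ℂ (Matrix (Idx j) (Idx j) ℂ) where
  carrier := {M | (∀ i t, onesIdx j i ≠ onesIdx j t → M i t = 0) ∧
      ∀ i t, sgnIdx j t * M i (flipIdx j t) = sgnIdx j (flipIdx j i) * M (flipIdx j i) t}
  add_mem' := by
    rintro M N ⟨hM1, hM2⟩ ⟨hN1, hN2⟩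
    refine ⟨fun i t h => ?_, fun i t => ?_⟩
    · show M i t + N i t = 0
      rw [hM1 i t h, hN1 i t h, add_zero]
    · show sgnIdx j t * (M i (flipIdx j t) + N i (flipIdx j t)) = _
      rw [mul_add, hM2 i t, hN2 i t]
      simp [Matrix.add_apply]
      ring
  zero_mem' := ⟨fun _ _ _ => rfl, fun _ _ => by simp⟩
  smul_mem' := by
    rintro c M ⟨hM1, hM2⟩
    refine ⟨fun i t h => ?_, fun i t => ?_⟩
    · show c * M i t = 0
      rw [hM1 i t h, mul_zero]
    · show sgnIdx j t * (c * M i (flipIdx j t)) = sgnIdx j (flipIdx j i) * (c * M (flipIdx j i) t)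
      calc sgnIdx j t * (c * M i (flipIdx j t)) = c * (sgnIdx j t * M i (flipIdx j t)) := by ring
        _ = c * (sgnIdx j (flipIdx j i) * M (flipIdx j i) t) := by rw [hM2 i t]
        _ = _ := by ring

/-- Transversal index set: pairs with equal weight whose first entry starts with `0`. -/
def TransSet : Type :=
  {p : Idx j × Idx j // onesIdx j p.1 = onesIdx j p.2 ∧ firstIdx j p.1 = 0}

instance : Fintype (TransSet j) := by
  unfold TransSet
  infer_instance

lemma fl2_eq_zero {c : Fin 2} (h : ¬ c = 0) : fl2 c = 0 := by
  fin_cases c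
  · exact absurd rfl h
  · rfl

lemma ones_flip_eq {i t : Idx j} (h : onesIdx j i = onesIdx j t) :
    onesIdx j (flipIdx j i) = onesIdx j (flipIdx j t) := by
  rw [ones_flip, ones_flip, h]

lemma ones_flip_iff {i t : Idx j} :
    onesIdx j (flipIdx j i) = onesIdx j t ↔ onesIdx j i = onesIdx j (flipIdx j t) := by
  rw [ones_flip, ones_flip]
  have h1 := ones_le j i
  have h2 := ones_le j t
  omega

/-- Reconstruction of a solution matrix from its values on the transversal. -/
def funToMatrix (v : TransSet j → ℂ) : Matrix (Idx j) (Idx j) ℂ :=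
  fun i t =>
    if h : onesIdx j i = onesIdx j t then
      (if h0 : firstIdx j i = 0 then v ⟨(i, t), ⟨h, h0⟩⟩
       else sgnIdx j i * sgnIdx j t *
          v ⟨(flipIdx j i, flipIdx j t),
            ⟨ones_flip_eq j h, by rw [firstIdx_flip, fl2_eq_zero h0]⟩⟩)
    else 0

lemma funToMatrix_mem (v : TransSet j → ℂ) : funToMatrix j v ∈ solSet j := by
  constructor
  · intro i t h
    exact dif_neg h
  · intro i t
    by_cases hc : onesIdx j i = onesIdx j (flipIdx j t)
    · have hc' : onesIdx j (flipIdx j i) = onesIdx j t := (ones_flip_iff j).mpr hc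
      by_cases h0 : firstIdx j i = 0
      · have h1 : ¬ firstIdx j (flipIdx j i) = 0 := by
          rw [firstIdx_flip, h0]
          decide
        have eL : funToMatrix j v i (flipIdx j t) = v ⟨(i, flipIdx j t), ⟨hc, h0⟩⟩ := by
          unfold funToMatrix
          rw [dif_pos hc, dif_pos h0]
        have eR : funToMatrix j v (flipIdx j i) t
            = sgnIdx j (flipIdx j i) * sgnIdx j t *
              v ⟨(flipIdx j (flipIdx j i), flipIdx j t),
                ⟨ones_flip_eq j hc', by rw [firstIdx_flip, fl2_eq_zero h1]⟩⟩ := by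
          unfold funToMatrix
          rw [dif_pos hc', dif_neg h1]
        have he : (⟨(flipIdx j (flipIdx j i), flipIdx j t),
              ⟨ones_flip_eq j hc', by rw [firstIdx_flip, fl2_eq_zero h1]⟩⟩ : TransSet j)
            = ⟨(i, flipIdx j t), ⟨hc, h0⟩⟩ := by
          apply Subtype.ext
          show (flipIdx j (flipIdx j i), flipIdx j t) = (i, flipIdx j t)
          rw [flip_flip]
        rw [eL, eR, he]
        calc sgnIdx j t * v ⟨(i, flipIdx j t), ⟨hc, h0⟩⟩
            = (1 : ℂ) * (sgnIdx j t * v ⟨(i, flipIdx j t), ⟨hc, h0⟩⟩) := by ring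
          _ = (sgnIdx j (flipIdx j i) * sgnIdx j (flipIdx j i)) *
              (sgnIdx j t * v ⟨(i, flipIdx j t), ⟨hc, h0⟩⟩) := by rw [sgn_mul_self]
          _ = _ := by ring
      · have h1 : firstIdx j (flipIdx j i) = 0 := by
          rw [firstIdx_flip, fl2_eq_zero h0]
        have eL : funToMatrix j v i (flipIdx j t)
            = sgnIdx j i * sgnIdx j (flipIdx j t) *
              v ⟨(flipIdx j i, flipIdx j (flipIdx j t)),
                ⟨ones_flip_eq j hc, by rw [firstIdx_flip, fl2_eq_zero h0]⟩⟩ := by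
          unfold funToMatrix
          rw [dif_pos hc, dif_neg h0]
        have eR : funToMatrix j v (flipIdx j i) t = v ⟨(flipIdx j i, t), ⟨hc', h1⟩⟩ := by
          unfold funToMatrix
          rw [dif_pos hc', dif_pos h1]
        have he : (⟨(flipIdx j i, flipIdx j (flipIdx j t)),
              ⟨ones_flip_eq j hc, by rw [firstIdx_flip, fl2_eq_zero h0]⟩⟩ : TransSet j)
            = ⟨(flipIdx j i, t), ⟨hc', h1⟩⟩ := by
          apply Subtype.ext
          show (flipIdx j i, flipIdx j (flipIdx j t)) = (flipIdx j i, t)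
          rw [flip_flip]
        rw [eL, eR, he]
        have hs : sgnIdx j t * (sgnIdx j i * sgnIdx j (flipIdx j t)) = sgnIdx j (flipIdx j i) := by
          calc sgnIdx j t * (sgnIdx j i * sgnIdx j (flipIdx j t))
              = sgnIdx j i * (sgnIdx j t * sgnIdx j (flipIdx j t)) := by ring
            _ = sgnIdx j i * (sgnIdx j i * sgnIdx j (flipIdx j i)) := by
                rw [sgn_mul_flip, sgn_mul_flip]
            _ = (sgnIdx j i * sgnIdx j i) * sgnIdx j (flipIdx j i) := by ring
            _ = sgnIdx j (flipIdx j i) := by rw [sgn_mul_self, one_mul]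
        calc sgnIdx j t * (sgnIdx j i * sgnIdx j (flipIdx j t) * v ⟨(flipIdx j i, t), ⟨hc', h1⟩⟩)
            = (sgnIdx j t * (sgnIdx j i * sgnIdx j (flipIdx j t))) *
                v ⟨(flipIdx j i, t), ⟨hc', h1⟩⟩ := by ring
          _ = _ := by rw [hs]
    · have hc' : ¬ onesIdx j (flipIdx j i) = onesIdx j t := fun h => hc ((ones_flip_iff j).mp h)
      rw [show funToMatrix j v i (flipIdx j t) = 0 from dif_neg hc,
        show funToMatrix j v (flipIdx j i) t = 0 from dif_neg hc']
      simp

/-- The relation satisfied by solution matrices under double flip. -/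
lemma sol_rel {M : Matrix (Idx j) (Idx j) ℂ} (hM : M ∈ solSet j) (i t : Idx j) :
    sgnIdx j i * sgnIdx j t * M (flipIdx j i) (flipIdx j t) = M i t := by
  have h := hM.2 i (flipIdx j t)
  rw [flip_flip] at h
  -- h : sgn (flip t) * M i t = sgn (flip i) * M (flip i) (flip t)
  have h2 : M (flipIdx j i) (flipIdx j t)
      = sgnIdx j (flipIdx j i) * (sgnIdx j (flipIdx j t) * M i t) := by
    calc M (flipIdx j i) (flipIdx j t)
        = (sgnIdx j (flipIdx j i) * sgnIdx j (flipIdx j i)) * M (flipIdx j i) (flipIdx j t) := by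
          rw [sgn_mul_self, one_mul]
      _ = sgnIdx j (flipIdx j i) * (sgnIdx j (flipIdx j i) * M (flipIdx j i) (flipIdx j t)) := by
          ring
      _ = sgnIdx j (flipIdx j i) * (sgnIdx j (flipIdx j t) * M i t) := by rw [← h]
  rw [h2]
  have e1 := sgn_mul_flip j i
  have e2 := sgn_mul_flip j t
  have e3 : ((-1 : ℂ) ^ (j + 1)) * ((-1 : ℂ) ^ (j + 1)) = 1 := by
    rw [← pow_add]
    exact Even.neg_one_pow ⟨j + 1, by ring⟩
  calc sgnIdx j i * sgnIdx j t *
        (sgnIdx j (flipIdx j i) * (sgnIdx j (flipIdx j t) * M i t))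
      = (sgnIdx j i * sgnIdx j (flipIdx j i)) * (sgnIdx j t * sgnIdx j (flipIdx j t)) * M i t := by
        ring
    _ = ((-1 : ℂ) ^ (j + 1)) * ((-1 : ℂ) ^ (j + 1)) * M i t := by rw [e1, e2]
    _ = M i t := by rw [e3, one_mul]

/-- The solution space is linearly equivalent to functions on the transversal. -/
def solEquiv : solSet j ≃ₗ[ℂ] (TransSet j → ℂ) := by
  refine LinearEquiv.ofLinear
    { toFun := fun M p => (M : Matrix (Idx j) (Idx j) ℂ) p.1.1 p.1.2
      map_add' := fun M N => rfl
      map_smul' := fun c M => rfl }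
    { toFun := fun v => ⟨funToMatrix j v, funToMatrix_mem j v⟩
      map_add' := fun v w => ?_
      map_smul' := fun c v => ?_ } ?_ ?_
  · apply Subtype.ext
    show funToMatrix j (v + w) = funToMatrix j v + funToMatrix j w
    funext i t
    show funToMatrix j (v + w) i t = funToMatrix j v i t + funToMatrix j w i t
    unfold funToMatrix
    split_ifs
    · rfl
    · exact mul_add _ _ _
    · exact (add_zero 0).symm
  · apply Subtype.ext
    show funToMatrix j (c • v) = c • funToMatrix j v
    funext i t
    show funToMatrix j (c • v) i t = c * funToMatrix j v i t
    unfold funToMatrix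
    split_ifs
    · rfl
    · exact mul_left_comm (sgnIdx j i * sgnIdx j t) c _
    · exact (mul_zero c).symm
  · apply LinearMap.ext
    intro v
    funext p
    show funToMatrix j v p.1.1 p.1.2 = v p
    obtain ⟨⟨i, t⟩, h, h0⟩ := p
    show funToMatrix j v i t = _
    rw [funToMatrix, dif_pos h, dif_pos h0]
  · apply LinearMap.ext
    rintro ⟨M, hM⟩
    apply Subtype.ext
    show funToMatrix j (fun p => M p.1.1 p.1.2) = M
    funext i t
    by_cases h : onesIdx j i = onesIdx j t
    · by_cases h0 : firstIdx j i = 0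
      · show funToMatrix j _ i t = M i t
        rw [funToMatrix, dif_pos h, dif_pos h0]
      · show funToMatrix j _ i t = M i t
        rw [funToMatrix, dif_pos h, dif_neg h0]
        exact sol_rel j hM i t
    · show funToMatrix j _ i t = M i t
      rw [funToMatrix, dif_neg h, (hM.1 i t h)]

lemma finrank_solSet : Module.finrank ℂ (solSet j) = Fintype.card (TransSet j) := by
  rw [LinearEquiv.finrank_eq (solEquiv j), Module.finrank_pi]

end DicAux
namespace DicAux

/-- Weight of a 0-1 vector. -/
def wt {K : ℕ} (a : Fin K → Fin 2) : ℕ := ∑ m, (a m : ℕ)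

def toFn : (j : ℕ) → Idx j → (Fin (j + 1) → Fin 2)
  | 0, c => fun _ => idx0 c
  | (j+1), pc => Fin.cons pc.2 (toFn j pc.1)

def ofFn : (j : ℕ) → (Fin (j + 1) → Fin 2) → Idx j
  | 0, a => a 0
  | (j+1), a => (ofFn j (fun m => a m.succ), a 0)

lemma ofFn_toFn (j : ℕ) (i : Idx j) : ofFn j (toFn j i) = i := by
  induction j with
  | zero => rfl
  | succ j ih =>
    obtain ⟨p, c⟩ := i
    simp only [toFn, ofFn, Fin.cons_succ, Fin.cons_zero]
    simp [ih p]; rfl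

lemma toFn_ofFn (j : ℕ) (a : Fin (j + 1) → Fin 2) : toFn j (ofFn j a) = a := by
  induction j with
  | zero =>
    funext m
    show a 0 = a m
    have hm : m = 0 := by omega
    rw [hm]
  | succ j ih =>
    funext m
    simp only [ofFn, toFn]
    refine Fin.cases ?_ (fun m' => ?_) m
    · rw [Fin.cons_zero]
    · rw [Fin.cons_succ, ih (fun m => a m.succ)]

/-- The equivalence between `Idx j` and 0-1 vectors of length `j+1`. -/
def idxEquiv (j : ℕ) : Idx j ≃ (Fin (j + 1) → Fin 2) where
  toFun := toFn j
  invFun := ofFn j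
  left_inv := ofFn_toFn j
  right_inv := toFn_ofFn j

lemma wt_toFn (j : ℕ) (i : Idx j) : wt (toFn j i) = onesIdx j i := by
  induction j with
  | zero =>
    show ∑ m : Fin 1, ((idx0 i : Fin 2) : ℕ) = (idx0 i : ℕ)
    simp
  | succ j ih =>
    show wt (Fin.cons i.2 (toFn j i.1)) = onesIdx j i.1 + (i.2 : ℕ)
    unfold wt
    rw [Fin.sum_univ_succ]
    simp only [Fin.cons_zero, Fin.cons_succ]
    rw [show (∑ m : Fin (j+1), ((toFn j i.1 m : Fin 2) : ℕ)) = wt (toFn j i.1) from rfl, ih i.1]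
    ring

lemma zero_toFn (j : ℕ) (i : Idx j) : toFn j i 0 = firstIdx j i := by
  cases j with
  | zero => rfl
  | succ j => exact Fin.cons_zero _ _

/-- Cardinality of vectors with a given weight. -/
lemma card_wt (K m : ℕ) :
    Fintype.card {a : Fin K → Fin 2 // wt a = m} = K.choose m := by
  have e : {a : Fin K → Fin 2 // wt a = m} ≃ {s : Finset (Fin K) // s.card = m} := by
    have hwt : ∀ a : Fin K → Fin 2, wt a = (Finset.univ.filter (fun x => a x = 1)).card := by
      intro a
      rw [Finset.card_filter]
      unfold wt
      apply Finset.sum_congr rfl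
      intro x _
      rcases Fin.exists_fin_two.mp ⟨a x, rfl⟩ with h | h <;> rw [h] <;> rfl
    refine
      { toFun := fun a => ⟨Finset.univ.filter (fun x => a.1 x = 1), by
          rw [← hwt a.1]; exact a.2⟩
        invFun := fun s => ⟨fun x => if x ∈ s.1 then 1 else 0, by
          rw [hwt]
          rw [show (Finset.univ.filter fun x => (if x ∈ s.1 then (1 : Fin 2) else 0) = 1) = s.1
            from ?_]
          · exact s.2
          · ext x
            by_cases h : x ∈ s.1 <;> simp [h]⟩
        left_inv := ?_
        right_inv := ?_ }
    · rintro ⟨a, ha⟩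
      apply Subtype.ext
      funext x
      rcases Fin.exists_fin_two.mp ⟨a x, rfl⟩ with h | h <;> simp [h]
    · rintro ⟨s, hs⟩
      apply Subtype.ext
      ext x
      by_cases h : x ∈ s <;> simp [h]
  rw [Fintype.card_congr e, Fintype.card_finset_len, Fintype.card_fin]

/-- Cardinality of vectors with given weight and first entry `0`. -/
lemma card_wt_zero (j m : ℕ) :
    Fintype.card {a : Fin (j + 1) → Fin 2 // a 0 = 0 ∧ wt a = m} = j.choose m := by
  have e : {a : Fin (j + 1) → Fin 2 // a 0 = 0 ∧ wt a = m}
      ≃ {b : Fin j → Fin 2 // wt b = m} := by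
    have hw : ∀ (c : Fin 2) (b : Fin j → Fin 2), wt (Fin.cons c b) = (c : ℕ) + wt b := by
      intro c b
      unfold wt
      rw [Fin.sum_univ_succ]
      simp [Fin.cons_zero, Fin.cons_succ]
    refine
      { toFun := fun a => ⟨fun m' => a.1 m'.succ, ?_⟩
        invFun := fun b => ⟨Fin.cons 0 b.1, ?_, ?_⟩
        left_inv := ?_
        right_inv := ?_ }
    · obtain ⟨a, h0, hw'⟩ := a
      have : a = Fin.cons 0 (fun m' => a m'.succ) := by
        funext x
        refine Fin.cases ?_ ?_ x
        · rw [Fin.cons_zero, h0]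
        · intro x'; rw [Fin.cons_succ]
      rw [this, hw] at hw'
      simpa using hw'
    · exact Fin.cons_zero _ _
    · rw [hw]
      simpa using b.2
    · rintro ⟨a, h0, hw'⟩
      apply Subtype.ext
      funext x
      refine Fin.cases ?_ ?_ x
      · simp [h0]
      · intro x'
        simp
    · rintro ⟨b, hb⟩
      apply Subtype.ext
      funext x
      simp
  rw [Fintype.card_congr e, card_wt]

/-- The cardinality of the transversal. -/
lemma card_TransSet (j : ℕ) : Fintype.card (TransSet j) = (2 * j + 1).choose (j + 1) := by
  classical
  -- move to the function world
  have e : TransSet j ≃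
      {q : (Fin (j+1) → Fin 2) × (Fin (j+1) → Fin 2) // q.1 0 = 0 ∧ wt q.1 = wt q.2} := by
    refine
      { toFun := fun p => ⟨(toFn j p.1.1, toFn j p.1.2), ?_, ?_⟩
        invFun := fun q => ⟨(ofFn j q.1.1, ofFn j q.1.2), ?_, ?_⟩
        left_inv := ?_
        right_inv := ?_ }
    · show toFn j p.1.1 0 = 0
      rw [zero_toFn]; exact p.2.2
    · show wt (toFn j p.1.1) = wt (toFn j p.1.2)
      rw [wt_toFn, wt_toFn]; exact p.2.1
    · show onesIdx j (ofFn j q.1.1) = onesIdx j (ofFn j q.1.2)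
      rw [← wt_toFn, ← wt_toFn, toFn_ofFn, toFn_ofFn]
      exact q.2.2
    · show firstIdx j (ofFn j q.1.1) = 0
      rw [← zero_toFn, toFn_ofFn]
      exact q.2.1
    · rintro ⟨⟨a, b⟩, h⟩
      apply Subtype.ext
      show (ofFn j (toFn j a), ofFn j (toFn j b)) = (a, b)
      rw [ofFn_toFn, ofFn_toFn]
    · rintro ⟨⟨a, b⟩, h⟩
      apply Subtype.ext
      show (toFn j (ofFn j a), toFn j (ofFn j b)) = (a, b)
      rw [toFn_ofFn, toFn_ofFn]
  rw [Fintype.card_congr e]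
  -- sigma decomposition
  have e2 : {q : (Fin (j+1) → Fin 2) × (Fin (j+1) → Fin 2) // q.1 0 = 0 ∧ wt q.1 = wt q.2}
      ≃ Σ a : {a : Fin (j+1) → Fin 2 // a 0 = 0},
          {b : Fin (j+1) → Fin 2 // wt b = wt a.1} := by
    refine
      { toFun := fun q => ⟨⟨q.1.1, q.2.1⟩, ⟨q.1.2, q.2.2.symm⟩⟩
        invFun := fun x => ⟨(x.1.1, x.2.1), x.1.2, x.2.2.symm⟩
        left_inv := fun q => rfl
        right_inv := fun x => rfl }
  rw [Fintype.card_congr e2, Fintype.card_sigma]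
  have hterm : ∀ a : {a : Fin (j+1) → Fin 2 // a 0 = 0},
      Fintype.card {b : Fin (j+1) → Fin 2 // wt b = wt a.1} = (j+1).choose (wt a.1) :=
    fun a => card_wt (j+1) (wt a.1)
  rw [Finset.sum_congr rfl (fun a _ => hterm a)]
  have hmap : ∀ a ∈ (Finset.univ : Finset {a : Fin (j+1) → Fin 2 // a 0 = 0}),
      wt a.1 ∈ Finset.range (j + 1) := by
    intro a _
    have h0 : a.1 0 = 0 := a.2
    have hle : wt a.1 ≤ j := by
      unfold wt
      rw [Fin.sum_univ_succ, h0]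
      simp only [Fin.val_zero, zero_add]
      calc ∑ m : Fin j, ((a.1 m.succ : Fin 2) : ℕ) ≤ ∑ m : Fin j, 1 :=
            Finset.sum_le_sum (fun x _ => Fin.is_le (a.1 x.succ))
        _ = j := by simp
    exact Finset.mem_range.mpr (by omega)
  have hmain := Finset.sum_fiberwise_of_maps_to hmap
    (fun a : {a : Fin (j+1) → Fin 2 // a 0 = 0} => (j+1).choose (wt a.1))
  rw [← hmain]
  have hstep : ∀ m ∈ Finset.range (j + 1),
      (∑ a ∈ Finset.univ.filter
        (fun a : {a : Fin (j+1) → Fin 2 // a 0 = 0} => wt a.1 = m), (j+1).choose (wt a.1))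
      = j.choose m * (j+1).choose m := by
    intro m _
    have hconst : ∀ a ∈ Finset.univ.filter
        (fun a : {a : Fin (j+1) → Fin 2 // a 0 = 0} => wt a.1 = m),
        (j+1).choose (wt a.1) = (j+1).choose m := by
      intro a ha
      rw [(Finset.mem_filter.mp ha).2]
    rw [Finset.sum_congr rfl hconst, Finset.sum_const, smul_eq_mul]
    congr 1
    have hcard : (Finset.univ.filter
        (fun a : {a : Fin (j+1) → Fin 2 // a 0 = 0} => wt a.1 = m)).card
        = Fintype.card {a : Fin (j+1) → Fin 2 // a 0 = 0 ∧ wt a = m} := by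
      rw [Fintype.card_subtype]
      apply Finset.card_bij (fun a _ => a.1)
      · intro a ha
        simp only [Finset.mem_filter, Finset.mem_univ, true_and] at ha ⊢
        exact ⟨a.2, ha⟩
      · intro a ha a' ha' h
        exact Subtype.ext h
      · intro b hb
        simp only [Finset.mem_filter, Finset.mem_univ, true_and] at hb
        exact ⟨⟨b, hb.1⟩, by simp [hb.2], rfl⟩
    rw [hcard, card_wt_zero]
  rw [Finset.sum_congr rfl hstep]
  -- Vandermonde
  have hv := Nat.add_choose_eq j (j + 1) (j + 1)
  rw [Finset.Nat.sum_antidiagonal_eq_sum_range_succ_mk] at hv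
  have hsymm : ∀ p ∈ Finset.range (j + 2), j.choose p * (j+1).choose (j + 1 - p)
      = j.choose p * (j+1).choose p := by
    intro p hp
    have hple : p ≤ j + 1 := Nat.lt_succ_iff.mp (Finset.mem_range.mp hp)
    rw [Nat.choose_symm hple]
  rw [Finset.sum_congr rfl hsymm] at hv
  rw [Finset.sum_range_succ, Nat.choose_succ_self, zero_mul, add_zero] at hv
  have : j + (j + 1) = 2 * j + 1 := by ring
  rw [this] at hv
  exact hv.symm

end DicAux
namespace DicAux

lemma ev_eq_iff (n : ℕ) (j : ℕ) (hjn : j + 1 < n) (i t : Idx j) :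
    evIdx ((Real.pi : ℂ) * Complex.I / n) j i = evIdx ((Real.pi : ℂ) * Complex.I / n) j t ↔
      onesIdx j i = onesIdx j t := by
  set θ : ℂ := (Real.pi : ℂ) * Complex.I / n with hθdef
  have hpi : (Real.pi : ℂ) ≠ 0 := by
    exact_mod_cast Real.pi_ne_zero
  have hI : Complex.I ≠ 0 := Complex.I_ne_zero
  have hn0 : (n : ℂ) ≠ 0 := Nat.cast_ne_zero.mpr (by omega)
  have hθ : θ ≠ 0 := div_ne_zero (mul_ne_zero hpi hI) hn0
  constructor
  · intro h
    rw [evIdx_eq_exp, evIdx_eq_exp, Complex.exp_eq_exp_iff_exists_int] at h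
    obtain ⟨m, hm⟩ := h
    have h2πI : (m : ℂ) * (2 * (Real.pi : ℂ) * Complex.I) = (2 * m * n : ℂ) * θ := by
      rw [hθdef]
      field_simp
    rw [h2πI] at hm
    have hcan : (((j : ℤ) + 1) - 2 * (onesIdx j i : ℤ) : ℂ)
        = (((j : ℤ) + 1) - 2 * (onesIdx j t : ℤ) : ℂ) + 2 * m * n := by
      apply mul_right_cancel₀ hθ
      rw [add_mul]
      convert hm using 2 <;> push_cast <;> ring
    have hZ : ((j : ℤ) + 1) - 2 * (onesIdx j i : ℤ)
        = (((j : ℤ) + 1) - 2 * (onesIdx j t : ℤ)) + 2 * m * n := by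
      exact_mod_cast hcan
    have hmn : (onesIdx j t : ℤ) - (onesIdx j i : ℤ) = m * n := by linarith
    have hi := ones_le j i
    have ht := ones_le j t
    have hiZ : (onesIdx j i : ℤ) ≤ (j : ℤ) + 1 := by exact_mod_cast hi
    have htZ : (onesIdx j t : ℤ) ≤ (j : ℤ) + 1 := by exact_mod_cast ht
    have hjnZ : ((j : ℤ) + 1) < (n : ℤ) := by exact_mod_cast hjn
    have hnn : (0 : ℤ) ≤ (n : ℤ) := by positivity
    rcases lt_trichotomy m 0 with hm0 | hm0 | hm0
    · exfalso
      have h1 : m * (n : ℤ) ≤ (-1) * n :=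
        mul_le_mul_of_nonneg_right (by omega) hnn
      have h2 : (0 : ℤ) ≤ (onesIdx j i : ℤ) := by positivity
      linarith
    · subst hm0
      have : (onesIdx j t : ℤ) = (onesIdx j i : ℤ) := by linarith
      exact_mod_cast this.symm
    · exfalso
      have h1 : (1 : ℤ) * n ≤ m * n :=
        mul_le_mul_of_nonneg_right (by omega) hnn
      have h2 : (0 : ℤ) ≤ (onesIdx j t : ℤ) := by positivity
      linarith
  · intro h
    rw [evIdx_eq_exp, evIdx_eq_exp, h]

end DicAux

open DicAux

/-- For all integers `n > k ≥ 1`, the endomorphism algebra of the `k`-th tensor power of the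
standard representation of the dicyclic group of degree `n` satisfies
`dim_ℂ End_{Dic_n}(V^{⊗k}) = (1/2)·binomial(2k,k)`. -/
theorem dim_equivEnd_tensorPower_dicyclic_lt
    (n : ℕ) (hn : 1 ≤ n) (X A : GL (Fin 2) ℂ)
    (hX : (X : Matrix (Fin 2) (Fin 2) ℂ) = !![0, -1; 1, 0])
    (hA : (A : Matrix (Fin 2) (Fin 2) ℂ) =
      !![Complex.exp (Real.pi * Complex.I / n), 0;
         0, Complex.exp (-(Real.pi * Complex.I / n))])
    (G : Subgroup (GL (Fin 2) ℂ)) (hG : G = Subgroup.closure {X, A})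
    (k : ℕ) (hk : 1 ≤ k) (hkn : k < n) :
    (Module.finrank ℂ (equivEnd (TPowRep G (k - 1))) : ℚ) =
      (Nat.choose (2 * k) k : ℚ) / 2 := by
  subst hG
  obtain ⟨j, rfl⟩ : ∃ j, k = j + 1 := ⟨k - 1, by omega⟩
  rw [show j + 1 - 1 = j from rfl]
  set θ : ℂ := (Real.pi : ℂ) * Complex.I / n with hθdef
  set Gc := Subgroup.closure {X, A} with hGc
  have hA' : ((A : GL (Fin 2) ℂ) : Matrix (Fin 2) (Fin 2) ℂ)
      = !![Complex.exp θ, 0; 0, Complex.exp (-θ)] := hA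
  -- identify the image of equivEnd under the coordinate equivalence
  set e := (LinearMap.toMatrix (bIdx j) (bIdx j) :
      ((TPow j : Type) →ₗ[ℂ] (TPow j : Type)) ≃ₗ[ℂ] Matrix (Idx j) (Idx j) ℂ) with he_def
  have hchar : ∀ f : (TPow j : Type) →ₗ[ℂ] (TPow j : Type),
      f ∈ equivEnd (TPowRep Gc j) ↔ e f ∈ solSet j := by
    intro f
    set M := e f with hMdef
    have hMf : ∀ i t, M i t = (bIdx j).repr (f (bIdx j t)) i := by
      intro i t
      rw [hMdef, he_def]
      exact LinearMap.toMatrix_apply _ _ _ _ _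
    have hiffX := comm_perm_iff (G := Gc) ⟨X, X_mem⟩ (sgnIdx j) (flipIdx j) (flip_flip j)
      (fun s => rep_X (⟨X, X_mem⟩ : Gc) hX j s) f
    have hiffA := comm_diag_iff (G := Gc) ⟨A, A_mem⟩ (evIdx θ j)
      (fun s => rep_A (⟨A, A_mem⟩ : Gc) hA' j s) f
    rw [mem_equivEnd_iff f, hiffX, hiffA]
    constructor
    · rintro ⟨hfX, hfA⟩
      constructor
      · intro i t hne
        have h2 := hfA i t
        rw [← hMf i t] at h2
        have hev : evIdx θ j t ≠ evIdx θ j i := by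
          intro h
          exact hne (((ev_eq_iff n j hkn t i).mp h).symm)
        have h3 : (evIdx θ j t - evIdx θ j i) * M i t = 0 := by
          rw [sub_mul, h2, sub_self]
        rcases mul_eq_zero.mp h3 with h4 | h4
        · exact absurd (sub_eq_zero.mp h4) hev
        · exact h4
      · intro i t
        have h2 := hfX i t
        rw [← hMf, ← hMf] at h2
        exact h2
    · rintro ⟨h1, h2⟩
      constructor
      · intro i t
        have h3 := h2 i t
        rw [← hMf i (flipIdx j t), ← hMf (flipIdx j i) t]
        exact h3
      · intro i t
        by_cases ho : onesIdx j i = onesIdx j t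
        · have hev : evIdx θ j t = evIdx θ j i := (ev_eq_iff n j hkn t i).mpr ho.symm
          rw [hev]
        · have h4 : M i t = 0 := h1 i t ho
          rw [← hMf i t, h4, mul_zero, mul_zero]
  have hmap : Submodule.map (e : ((TPow j : Type) →ₗ[ℂ] (TPow j : Type)) →ₗ[ℂ]
      Matrix (Idx j) (Idx j) ℂ) (equivEnd (TPowRep Gc j)) = solSet j := by
    ext M
    simp only [Submodule.mem_map]
    constructor
    · rintro ⟨f, hf, rfl⟩
      exact (hchar f).mp hf
    · intro hM
      refine ⟨e.symm M, ?_, ?_⟩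
      · rw [hchar (e.symm M), LinearEquiv.apply_symm_apply]
        exact hM
      · exact e.apply_symm_apply M
  -- compute the dimension
  have hrank : Module.finrank ℂ (equivEnd (TPowRep Gc j)) = (2 * j + 1).choose (j + 1) := by
    have he := LinearEquiv.finrank_eq (e.submoduleMap (equivEnd (TPowRep Gc j)))
    rw [he, hmap, finrank_solSet, card_TransSet]
  rw [hrank]
  -- final binomial identity
  have hnat : 2 * ((2 * j + 1).choose (j + 1)) = (2 * (j + 1)).choose (j + 1) := by
    have h1 : 2 * (j + 1) = (2 * j + 1) + 1 := by ring
    rw [h1, Nat.choose_succ_succ (2 * j + 1) j]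
    have h2 : (2 * j + 1).choose j = (2 * j + 1).choose (j + 1) := by
      have h4 := Nat.choose_symm (n := 2 * j + 1) (k := j + 1) (by omega)
      rwa [show 2 * j + 1 - (j + 1) = j by omega] at h4
    rw [h2, two_mul]
  rw [← hnat]
  push_cast
  ring
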